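/- Let T be a bounded operator with closed range on a complex Hilbert space and let T = U − V be a proper splitting. Then ker(U† V) = ker(V). -/

import Mathlib

open ContinuousLinearMap

/-- `Td` is the Moore–Penrose inverse of `T`. -/
def IsMoorePenroseInverse {H : Type*} [NormedAddCommGroup H] [InnerProductSpace ℂ H]
    [CompleteSpace H] (T Td : H →L[ℂ] H) : Prop :=
  T ∘L Td ∘L T = T ∧ Td ∘L T ∘L Td = Td ∧
    IsSelfAdjoint (T ∘L Td) ∧ IsSelfAdjoint (Td ∘L T)
/-- For a proper splitting `T = U - V` of a closed range operator, `ker(U† V) = ker V`. -/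
theorem ker_Ud_comp_V_eq_ker_V
    {H : Type*} [NormedAddCommGroup H] [InnerProductSpace ℂ H] [CompleteSpace H]
    (T U V Ud : H →L[ℂ] H)
    (hTcr : IsClosed (LinearMap.range (T : H →ₗ[ℂ] H) : Set H))
    (hsplit : T = U - V)
    (hran : LinearMap.range (U : H →ₗ[ℂ] H) = LinearMap.range (T : H →ₗ[ℂ] H))
    (hker : LinearMap.ker (U : H →ₗ[ℂ] H) = LinearMap.ker (T : H →ₗ[ℂ] H))
    (hUd : IsMoorePenroseInverse U Ud) :
    LinearMap.ker ((Ud ∘L V : H →L[ℂ] H) : H →ₗ[ℂ] H) = LinearMap.ker (V : H →ₗ[ℂ] H) := by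
  obtain ⟨h1, h2, h3, h4⟩ := hUd
  ext x
  simp only [LinearMap.mem_ker, coe_coe, coe_comp', Function.comp_apply]
  constructor
  · intro hx
    -- T x ∈ ran T = ran U, so T x = U w
    have hTx : T x ∈ LinearMap.range (U : H →ₗ[ℂ] H) := by
      rw [hran]; exact ⟨x, rfl⟩
    obtain ⟨w, hw : U w = T x⟩ := hTx
    have hVx : V x = U (x - w) := by
      have := congrArg (fun S : H →L[ℂ] H => S x) hsplit
      simp only [sub_apply] at this
      rw [map_sub, hw, this]
      abel
    have : U (Ud (V x)) = V x := by
      conv_rhs => rw [hVx]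
      calc U (Ud (V x)) = U (Ud (U (x - w))) := by rw [hVx]
        _ = (U ∘L Ud ∘L U) (x - w) := rfl
        _ = U (x - w) := by rw [h1]
    rw [hx, map_zero] at this
    exact this.symm
  · intro hx
    rw [hx, map_zero]
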